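/- Let X_1,...,X_n be independent random variables with mean zero and variances σ_l² > 0 with σ_1² + ... + σ_n² = 1, and put σ = max_l σ_l. Given an integer N ≥ 1, define n_0 = 0 and n_k = max{ l ≤ n : σ_1² + ... + σ_l² ≤ k/N }, and set V_k = Σ_{n_{k−1} < l ≤ n_k} X_l for k = 1,...,N. If N ≤ 1/(2σ²), then for each k = 1,...,N, 1/(2N) < Var(V_k) < 2/N. -/

import Mathlib

open MeasureTheory ProbabilityTheory Finset
open scoped Classical

/-- Lemma 7.1 (repacking of summands): let `X₁, …, Xₙ` be independent random variables
with mean zero and variances `σₗ² > 0` with `σ₁² + ⋯ + σₙ² = 1`, and let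
`σ = maxₗ σₗ`. Given `N ≥ 1`, set `n₀ = 0`,
`nₖ = max{ l ≤ n : σ₁² + ⋯ + σₗ² ≤ k/N }` and `Vₖ = ∑_{n_{k-1} < l ≤ nₖ} Xₗ`.
If `N ≤ 1/(2σ²)`, then `1/(2N) < Var(Vₖ) < 2/N` for each `k = 1, …, N`. -/
theorem repacking_block_variances
    (Ω : Type) (_mΩ : MeasurableSpace Ω) (μ : Measure Ω) [IsProbabilityMeasure μ]
    (n N : ℕ) (X : ℕ → Ω → ℝ) (σ : ℕ → ℝ)
    (hn : 1 ≤ n) (hN : 1 ≤ N)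
    (hmeas : ∀ l, l ∈ Icc 1 n → Measurable (X l))
    (hindep : iIndepFun
      (fun l : (Icc 1 n : Finset ℕ) => X l) μ)
    (hL2 : ∀ l, l ∈ Icc 1 n → MemLp (X l) 2 μ)
    (hmean : ∀ l, l ∈ Icc 1 n → ∫ ω, X l ω ∂μ = 0)
    (hσpos : ∀ l, l ∈ Icc 1 n → 0 < σ l)
    (hvar : ∀ l, l ∈ Icc 1 n → variance (X l) μ = (σ l) ^ 2)
    (hsum : ∑ l ∈ Icc 1 n, (σ l) ^ 2 = 1)
    (hNσ : ∀ l, l ∈ Icc 1 n → (N : ℝ) ≤ 1 / (2 * (σ l) ^ 2)) :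
    ∀ k, 1 ≤ k → k ≤ N →
      1 / (2 * (N : ℝ)) <
        variance (fun ω => ∑ l ∈ Ioc
            (Nat.findGreatest (fun l => (∑ i ∈ Icc 1 l, (σ i) ^ 2) ≤ ((k : ℝ) - 1) / N) n)
            (Nat.findGreatest (fun l => (∑ i ∈ Icc 1 l, (σ i) ^ 2) ≤ (k : ℝ) / N) n),
            X l ω) μ ∧
      variance (fun ω => ∑ l ∈ Ioc
            (Nat.findGreatest (fun l => (∑ i ∈ Icc 1 l, (σ i) ^ 2) ≤ ((k : ℝ) - 1) / N) n)
            (Nat.findGreatest (fun l => (∑ i ∈ Icc 1 l, (σ i) ^ 2) ≤ (k : ℝ) / N) n),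
            X l ω) μ < 2 / (N : ℝ) := by
  intro k hk1 hkN
  set S : ℕ → ℝ := fun m => ∑ i ∈ Icc 1 m, (σ i) ^ 2 with hS
  set a := Nat.findGreatest (fun l => (∑ i ∈ Icc 1 l, (σ i) ^ 2) ≤ ((k : ℝ) - 1) / N) n
    with ha_def
  set b := Nat.findGreatest (fun l => (∑ i ∈ Icc 1 l, (σ i) ^ 2) ≤ (k : ℝ) / N) n
    with hb_def
  have hNpos : (0 : ℝ) < N := by exact_mod_cast hN
  have hNinv : (0 : ℝ) < 1 / N := by positivity
  have hkR : (1 : ℝ) ≤ k := by exact_mod_cast hk1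
  have hkNR : (k : ℝ) ≤ N := by exact_mod_cast hkN
  have hS0 : S 0 = 0 := by simp [hS]
  -- each variance is at most 1/(2N)
  have hσsmall : ∀ l, l ∈ Icc 1 n → (σ l) ^ 2 ≤ 1 / (2 * N) := by
    intro l hl
    have h1 := hNσ l hl
    have h2 : 0 < (σ l) ^ 2 := pow_pos (hσpos l hl) 2
    rw [le_div_iff₀ (by nlinarith)] at h1
    rw [le_div_iff₀ (by positivity)]
    nlinarith
  have ha_le : a ≤ n := Nat.findGreatest_le n
  have hb_le : b ≤ n := Nat.findGreatest_le n
  have hab : a ≤ b := by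
    refine Nat.findGreatest_mono (fun m hm => le_trans hm ?_) le_rfl
    gcongr <;> linarith
  -- `S` values at `a`, `b`
  have hSa_le : S a ≤ ((k : ℝ) - 1) / N :=
    Nat.findGreatest_spec (P := fun l => (∑ i ∈ Icc 1 l, (σ i) ^ 2) ≤ ((k : ℝ) - 1) / N)
      (Nat.zero_le n)
      (by simpa using div_nonneg (by linarith : (0:ℝ) ≤ (k : ℝ) - 1) hNpos.le)
  have hSb_le : S b ≤ (k : ℝ) / N :=
    Nat.findGreatest_spec (P := fun l => (∑ i ∈ Icc 1 l, (σ i) ^ 2) ≤ (k : ℝ) / N)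
      (Nat.zero_le n)
      (by simpa using div_nonneg (by linarith : (0:ℝ) ≤ (k : ℝ)) hNpos.le)
  have hstep : ∀ m, S (m + 1) = S m + (σ (m + 1)) ^ 2 := by
    intro m
    simp only [hS]
    exact Finset.sum_Icc_succ_top (Nat.le_add_left 1 m) _
  have ha_lt : a < n := by
    rcases lt_or_eq_of_le ha_le with h | h
    · exact h
    · exfalso
      rw [h] at hSa_le
      have : S n = 1 := hsum
      rw [this] at hSa_le
      rw [le_div_iff₀ hNpos] at hSa_le
      linarith
  have hSa_gt : ((k : ℝ) - 1) / N - 1 / (2 * N) < S a := by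
    have hgr : ¬ ((∑ i ∈ Icc 1 (a + 1), (σ i) ^ 2) ≤ ((k : ℝ) - 1) / N) :=
      Nat.findGreatest_is_greatest (Nat.lt_succ_self a) ha_lt
    push_neg at hgr
    have hsmall := hσsmall (a + 1) (Finset.mem_Icc.mpr ⟨Nat.le_add_left 1 a, ha_lt⟩)
    have := hstep a
    simp only [hS] at this hgr ⊢
    linarith
  have hSb_gt : (k : ℝ) / N - 1 / (2 * N) < S b := by
    rcases lt_or_eq_of_le hb_le with h | h
    · have hgr : ¬ ((∑ i ∈ Icc 1 (b + 1), (σ i) ^ 2) ≤ (k : ℝ) / N) :=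
        Nat.findGreatest_is_greatest (Nat.lt_succ_self b) h
      push_neg at hgr
      have hsmall := hσsmall (b + 1) (Finset.mem_Icc.mpr ⟨Nat.le_add_left 1 b, h⟩)
      have := hstep b
      simp only [hS] at this hgr ⊢
      linarith
    · rw [h]
      have h1 : S n = 1 := hsum
      rw [h1, div_sub_div _ _ (ne_of_gt hNpos) (by positivity), div_lt_iff₀ (by positivity)]
      nlinarith
  -- subset property
  have hsubset : ∀ l ∈ Ioc a b, l ∈ Icc 1 n := by
    intro l hl
    rw [Finset.mem_Ioc] at hl
    exact Finset.mem_Icc.mpr ⟨Nat.succ_le_of_lt (lt_of_le_of_lt (Nat.zero_le a) hl.1),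
      hl.2.trans hb_le⟩
  -- variance of the block
  have hVar : variance (fun ω => ∑ l ∈ Ioc a b, X l ω) μ = S b - S a := by
    have h1 : (fun ω => ∑ l ∈ Ioc a b, X l ω) = ∑ l ∈ Ioc a b, X l := by
      funext ω; simp
    rw [h1, IndepFun.variance_sum (fun i hi => hL2 i (hsubset i hi))
      (fun i hi j hj hij =>
        hindep.indepFun (i := ⟨i, hsubset i (Finset.mem_coe.mp hi)⟩)
          (j := ⟨j, hsubset j (Finset.mem_coe.mp hj)⟩)
          (by simpa [Subtype.ext_iff] using hij))]
    rw [Finset.sum_congr rfl (fun l hl => hvar l (hsubset l hl))]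
    have hIcc : ∀ m : ℕ, S m = ∑ i ∈ Ioc 0 m, (σ i) ^ 2 := by
      intro m; simp [hS, ← Finset.Icc_add_one_left_eq_Ioc]
    have h2 : (∑ i ∈ Ioc 0 a, (σ i) ^ 2) + ∑ i ∈ Ioc a b, (σ i) ^ 2
        = ∑ i ∈ Ioc 0 b, (σ i) ^ 2 :=
      Finset.sum_Ioc_consecutive _ (Nat.zero_le a) hab
    rw [hIcc a, hIcc b] at *
    linarith
  rw [hVar]
  have e1 : ((k : ℝ) - 1) / N = (k : ℝ) / N - 1 / N := by ring
  have e2 : 1 / (2 * (N : ℝ)) = (1 / N) / 2 := by ring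
  have e3 : 2 / (N : ℝ) = 2 * (1 / N) := by ring
  rw [e1] at hSa_le hSa_gt
  rw [e2] at hSa_gt hSb_gt ⊢
  constructor
  · linarith
  · rw [e3]; linarith
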